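/- arXiv:1911.02342 — 2 statements merged into one kernel-verified Lean document; each statement's English description precedes it below -/
import Mathlib

section
/- Let Φ be a crystallographic root system in a finite-dimensional real inner product space V with base Δ and Weyl group W, and let S, T ⊆ Δ. Let H ∈ V be orthogonal to every element of T and regular off span(T), i.e. ⟨β, H⟩ ≠ 0 for every root β ∈ Φ with β ∉ span(T). Let w ∈ W satisfy: wα is a positive root for every α ∈ S, w^{-1}α is a positive root for every α ∈ T, and w(span(S)) = span(T). Let w' ∈ W with w' ≠ w satisfy: w'α is a positive root for every α ∈ S and w'^{-1}α is a positive root for every α ∈ T. Then w'^{-1}H − w^{-1}H does not lie in the linear span of S. -/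
open scoped RealInnerProductSpace

/-- The Weyl group of `Φ`: the subgroup of the orthogonal group (realized as linear
isometry equivalences) generated by the reflections in the roots. -/
noncomputable def weylGroup (V : Type*) [NormedAddCommGroup V] [InnerProductSpace ℝ V]
    (Φ : Set V) : Subgroup (V ≃ₗᵢ[ℝ] V) :=
  Subgroup.closure {g | ∃ α ∈ Φ, ∀ x : V, g x = x - (2 * ⟪x, α⟫ / ⟪α, α⟫) • α}

/-- A positive root: a root all of whose coefficients with respect to the base `Δ`
are nonnegative integers. -/
def isPositiveRoot {V : Type*} [NormedAddCommGroup V] [InnerProductSpace ℝ V]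
    (Φ : Set V) (Δ : Finset V) (x : V) : Prop :=
  x ∈ Φ ∧ ∃ c : V → ℤ, x = ∑ v ∈ Δ, (c v : ℝ) • v ∧ ∀ v ∈ Δ, 0 ≤ c v

section Aux

variable {V : Type*} [NormedAddCommGroup V] [InnerProductSpace ℝ V]

noncomputable def srefL (α : V) : V →ₗ[ℝ] V where
  toFun x := x - (2 * ⟪x, α⟫ / ⟪α, α⟫) • α
  map_add' x y := by
    rw [inner_add_left]
    rw [show 2 * (⟪x,α⟫ + ⟪y,α⟫) / ⟪α,α⟫ = 2*⟪x,α⟫/⟪α,α⟫ + 2*⟪y,α⟫/⟪α,α⟫ by ring]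
    rw [add_smul]; abel
  map_smul' r x := by
    rw [real_inner_smul_left]
    rw [show 2 * (r * ⟪x,α⟫) / ⟪α,α⟫ = r * (2*⟪x,α⟫/⟪α,α⟫) by ring]
    rw [RingHom.id_apply, smul_sub, smul_smul]

theorem srefL_invol (α : V) : Function.Involutive (srefL α) := by
  intro x
  by_cases hα : α = 0
  · simp [srefL, hα]
  · have hαα : ⟪α, α⟫ ≠ 0 := by
      simpa using (inner_self_ne_zero (𝕜 := ℝ)).2 hα
    show srefL α (x - (2 * ⟪x, α⟫ / ⟪α, α⟫) • α) = x
    unfold srefL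
    simp only [LinearMap.coe_mk, AddHom.coe_mk, inner_sub_left, real_inner_smul_left]
    rw [show 2 * (⟪x,α⟫ - 2 * ⟪x,α⟫ / ⟪α,α⟫ * ⟪α,α⟫) / ⟪α,α⟫ = -(2*⟪x,α⟫/⟪α,α⟫) by
      field_simp; ring]
    rw [neg_smul, sub_neg_eq_add, sub_add_cancel]

theorem srefL_norm (α : V) (x : V) : ‖srefL α x‖ = ‖x‖ := by
  have key : ⟪srefL α x, srefL α x⟫ = ⟪x, x⟫ := by
    by_cases hα : α = 0
    · simp [srefL, hα]
    · have hαα : ⟪α, α⟫ ≠ 0 := by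
        simpa using (inner_self_ne_zero (𝕜 := ℝ)).2 hα
      show ⟪x - (2 * ⟪x, α⟫ / ⟪α, α⟫) • α, x - (2 * ⟪x, α⟫ / ⟪α, α⟫) • α⟫ = ⟪x,x⟫
      simp only [inner_sub_left, inner_sub_right, real_inner_smul_left, real_inner_smul_right]
      rw [real_inner_comm α x]
      field_simp
      ring
  have h1 : ‖srefL α x‖ ^ 2 = ‖x‖ ^ 2 := by
    rw [← real_inner_self_eq_norm_sq, ← real_inner_self_eq_norm_sq, key]
  nlinarith [norm_nonneg (srefL α x), norm_nonneg x]

noncomputable def sref (α : V) : V ≃ₗᵢ[ℝ] V :=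
  ⟨LinearEquiv.ofInvolutive (srefL α) (srefL_invol α), srefL_norm α⟩

theorem sref_apply (α x : V) : sref α x = x - (2 * ⟪x, α⟫ / ⟪α, α⟫) • α := rfl

theorem sref_invol (α : V) : Function.Involutive (sref α) := srefL_invol α

theorem sref_mul_self (α : V) : sref α * sref α = 1 := by
  ext x
  exact sref_invol α x

theorem sref_inv (α : V) : (sref α)⁻¹ = sref α :=
  inv_eq_of_mul_eq_one_right (sref_mul_self α)

end Aux

section Aux2

variable {V : Type*} [NormedAddCommGroup V] [InnerProductSpace ℝ V]

theorem sref_self {α : V} (hα : α ≠ 0) : sref α α = -α := by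
  have hαα : ⟪α, α⟫ ≠ 0 := by
    simpa using (inner_self_ne_zero (𝕜 := ℝ)).2 hα
  rw [sref_apply]
  rw [show 2 * ⟪α,α⟫ / ⟪α,α⟫ = 2 by field_simp]
  rw [two_smul]; abel

theorem sref_neg (α : V) : sref (-α) = sref α := by
  ext x
  rw [sref_apply, sref_apply, inner_neg_left, inner_neg_right, inner_neg_right, neg_neg]
  rw [show 2 * -⟪x,α⟫ / ⟪α,α⟫ = -(2 * ⟪x,α⟫ / ⟪α,α⟫) by ring]
  rw [neg_smul, smul_neg, neg_neg]

theorem sref_smul {t : ℝ} (α : V) (ht : t ≠ 0) : sref (t • α) = sref α := by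
  ext x
  by_cases hα : α = 0
  · simp [sref_apply, hα]
  have hαα : ⟪α, α⟫ ≠ 0 := by
    simpa using (inner_self_ne_zero (𝕜 := ℝ)).2 hα
  rw [sref_apply, sref_apply, real_inner_smul_right, real_inner_smul_left,
    real_inner_smul_right, smul_smul]
  congr 1
  rw [show (2 * (t * ⟪x,α⟫) / (t * (t * ⟪α,α⟫))) * t = 2 * ⟪x,α⟫ / ⟪α,α⟫ by
    field_simp]

theorem sref_conj (g : V ≃ₗᵢ[ℝ] V) (α : V) : sref (g α) = g * sref α * g⁻¹ := by
  ext x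
  have h1 : g ((g⁻¹ : V ≃ₗᵢ[ℝ] V) x) = x := by
    rw [LinearIsometryEquiv.inv_def]; exact g.apply_symm_apply x
  have h2 : ⟪(g⁻¹ : V ≃ₗᵢ[ℝ] V) x, α⟫ = ⟪x, g α⟫ := by
    rw [← g.inner_map_map ((g⁻¹ : V ≃ₗᵢ[ℝ] V) x) α, h1]
  rw [LinearIsometryEquiv.coe_mul, LinearIsometryEquiv.coe_mul, Function.comp_apply,
    Function.comp_apply, sref_apply, sref_apply, map_sub, h1, map_smul, h2,
    g.inner_map_map]

theorem sref_adj (α x y : V) : ⟪sref α x, y⟫ = ⟪x, sref α y⟫ := by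
  rw [sref_apply, sref_apply, inner_sub_left, inner_sub_right, real_inner_smul_left,
    real_inner_smul_right]
  rw [real_inner_comm α y]
  ring

/-- product of reflections along a list -/
noncomputable def srP (l : List V) : V ≃ₗᵢ[ℝ] V := (l.map sref).prod

theorem srP_nil : srP ([] : List V) = 1 := rfl

theorem srP_cons (a : V) (l : List V) : srP (a :: l) = sref a * srP l := by
  simp [srP]

theorem srP_append (l m : List V) : srP (l ++ m) = srP l * srP m := by
  simp [srP]

theorem srP_cons_apply (a : V) (l : List V) (x : V) : srP (a :: l) x = sref a (srP l x) := by
  rw [srP_cons, LinearIsometryEquiv.coe_mul, Function.comp_apply]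

theorem srP_append_apply (l m : List V) (x : V) : srP (l ++ m) x = srP l (srP m x) := by
  rw [srP_append, LinearIsometryEquiv.coe_mul, Function.comp_apply]

theorem srP_inv (l : List V) : (srP l)⁻¹ = srP l.reverse := by
  induction l with
  | nil => simp [srP]
  | cons a l ih =>
    rw [srP_cons, mul_inv_rev, ih, sref_inv, List.reverse_cons, srP_append]
    simp [srP]

theorem srP_maps {Φ : Set V}
    (hrefl : ∀ α ∈ Φ, ∀ β ∈ Φ, β - (2 * ⟪β, α⟫ / ⟪α, α⟫) • α ∈ Φ)
    (l : List V) (hl : ∀ a ∈ l, a ∈ Φ) : ∀ β ∈ Φ, srP l β ∈ Φ := by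
  induction l with
  | nil => intro β hβ; simpa [srP] using hβ
  | cons a l ih =>
    intro β hβ
    rw [srP_cons_apply]
    exact hrefl a (hl a (by simp)) _ (ih (fun x hx => hl x (by simp [hx])) β hβ)

theorem sref_mem_weyl {Φ : Set V} {α : V} (hα : α ∈ Φ) : sref α ∈ weylGroup V Φ :=
  Subgroup.subset_closure ⟨α, hα, fun _ => rfl⟩

theorem weyl_eq_srP {Φ : Set V} {g : V ≃ₗᵢ[ℝ] V} (hg : g ∈ weylGroup V Φ) :
    ∃ l : List V, (∀ a ∈ l, a ∈ Φ) ∧ g = srP l := by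
  induction hg using Subgroup.closure_induction with
  | mem x hx =>
    obtain ⟨α, hα, hfun⟩ := hx
    refine ⟨[α], by simpa using hα, ?_⟩
    ext y
    rw [hfun y, srP_cons_apply, srP_nil, LinearIsometryEquiv.coe_one, id_eq, sref_apply]
  | one => exact ⟨[], by simp, rfl⟩
  | mul x y hx hy ihx ihy =>
    obtain ⟨l1, h1, e1⟩ := ihx
    obtain ⟨l2, h2, e2⟩ := ihy
    refine ⟨l1 ++ l2, ?_, by rw [e1, e2, srP_append]⟩
    intro a ha
    rcases List.mem_append.1 ha with h | h
    · exact h1 a h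
    · exact h2 a h
  | inv x hx ihx =>
    obtain ⟨l, h1, e1⟩ := ihx
    exact ⟨l.reverse, fun a ha => h1 a (List.mem_reverse.1 ha), by rw [e1, srP_inv]⟩

theorem weyl_maps {Φ : Set V}
    (hrefl : ∀ α ∈ Φ, ∀ β ∈ Φ, β - (2 * ⟪β, α⟫ / ⟪α, α⟫) • α ∈ Φ)
    {g : V ≃ₗᵢ[ℝ] V} (hg : g ∈ weylGroup V Φ) : ∀ β ∈ Φ, g β ∈ Φ := by
  obtain ⟨l, hl, rfl⟩ := weyl_eq_srP hg
  exact srP_maps hrefl l hl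

end Aux2

section Aux3

variable {V : Type*} [NormedAddCommGroup V] [InnerProductSpace ℝ V]
variable {Φ : Set V} {Δ : Finset V}

theorem coeff_unique (hli : LinearIndependent ℝ (fun x : Δ => (x : V)))
    {f g : V → ℝ} (h : ∑ v ∈ Δ, f v • v = ∑ v ∈ Δ, g v • v) :
    ∀ v ∈ Δ, f v = g v := by
  have h2 : ∑ v ∈ Δ, (f v - g v) • v = 0 := by
    simp only [sub_smul, Finset.sum_sub_distrib, h, sub_self]
  have h3 : ∑ i : Δ, (f (i : V) - g (i : V)) • (i : V) = 0 := by
    rw [Finset.sum_coe_sort Δ (fun v => (f v - g v) • v)]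
    exact h2
  intro v hv
  have h4 : f v - g v = 0 := linearIndependent_iff'.1 hli Finset.univ
    (fun i => f (i : V) - g (i : V)) h3 ⟨v, hv⟩ (Finset.mem_univ _)
  linarith

theorem neg_mem_root (h0 : (0 : V) ∉ Φ)
    (hrefl : ∀ α ∈ Φ, ∀ β ∈ Φ, β - (2 * ⟪β, α⟫ / ⟪α, α⟫) • α ∈ Φ)
    {γ : V} (hγ : γ ∈ Φ) : -γ ∈ Φ := by
  have hne : γ ≠ 0 := fun h => h0 (h ▸ hγ)
  have hγγ : ⟪γ, γ⟫ ≠ 0 := by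
    simpa using (inner_self_ne_zero (𝕜 := ℝ)).2 hne
  have := hrefl γ hγ γ hγ
  rw [show 2 * ⟪γ,γ⟫ / ⟪γ,γ⟫ = 2 by field_simp] at this
  rw [show γ - (2:ℝ) • γ = -γ by rw [two_smul]; abel] at this
  exact this

theorem root_pos_or_neg (h0 : (0 : V) ∉ Φ)
    (hrefl : ∀ α ∈ Φ, ∀ β ∈ Φ, β - (2 * ⟪β, α⟫ / ⟪α, α⟫) • α ∈ Φ)
    (hbase : ∀ γ ∈ Φ, ∃ c : V → ℤ,
      γ = ∑ v ∈ Δ, (c v : ℝ) • v ∧ ((∀ v ∈ Δ, 0 ≤ c v) ∨ (∀ v ∈ Δ, c v ≤ 0)))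
    {γ : V} (hγ : γ ∈ Φ) : isPositiveRoot Φ Δ γ ∨ isPositiveRoot Φ Δ (-γ) := by
  obtain ⟨c, hc, hor⟩ := hbase γ hγ
  rcases hor with h | h
  · exact Or.inl ⟨hγ, c, hc, h⟩
  · refine Or.inr ⟨neg_mem_root h0 hrefl hγ, fun v => -(c v), ?_, fun v hv => by
      simpa using h v hv⟩
    rw [hc]
    push_cast
    rw [← Finset.sum_neg_distrib]
    exact Finset.sum_congr rfl (fun v _ => by rw [neg_smul])

theorem not_pos_both (h0 : (0 : V) ∉ Φ)
    (hli : LinearIndependent ℝ (fun x : Δ => (x : V)))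
    {γ : V} (h1 : isPositiveRoot Φ Δ γ) (h2 : isPositiveRoot Φ Δ (-γ)) : False := by
  obtain ⟨hγ, c, hc, hcn⟩ := h1
  obtain ⟨_, d, hd, hdn⟩ := h2
  have hsum : ∑ v ∈ Δ, ((c v : ℝ)) • v = ∑ v ∈ Δ, (-(d v : ℝ)) • v := by
    have h3 : ∑ v ∈ Δ, (-(d v : ℝ)) • v = -∑ v ∈ Δ, ((d v : ℝ)) • v := by
      rw [← Finset.sum_neg_distrib]
      exact Finset.sum_congr rfl (fun v _ => by rw [neg_smul])
    rw [h3, ← hd, neg_neg, ← hc]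
  have key := coeff_unique hli hsum
  have hγ0 : γ = 0 := by
    rw [hc]
    apply Finset.sum_eq_zero
    intro v hv
    have k1 := key v hv
    have k2 : (0:ℝ) ≤ (c v : ℝ) := by exact_mod_cast hcn v hv
    have k3 : (0:ℝ) ≤ (d v : ℝ) := by exact_mod_cast hdn v hv
    have : (c v : ℝ) = 0 := by linarith
    rw [this, zero_smul]
  exact h0 (hγ0 ▸ hγ)

theorem pos_ne_zero (h0 : (0 : V) ∉ Φ) {x : V} (h : isPositiveRoot Φ Δ x) : x ≠ 0 :=
  fun he => h0 (he ▸ h.1)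

theorem pos_of_mem_base (hΔΦ : (Δ : Set V) ⊆ Φ) {α : V} (hα : α ∈ Δ) :
    isPositiveRoot Φ Δ α := by
  classical
  refine ⟨hΔΦ hα, fun v => if v = α then 1 else 0, ?_, fun v _ => by dsimp only; split <;> norm_num⟩
  rw [show ∀ s : Finset V, ∑ v ∈ s, (((if v = α then (1:ℤ) else 0) : ℤ) : ℝ) • v
      = ∑ v ∈ s, (if v = α then ((1:ℝ) • v) else 0) from fun s => Finset.sum_congr rfl
      (fun v _ => by split <;> simp)]
  rw [Finset.sum_ite_eq' Δ α (fun v => (1:ℝ) • v)]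
  simp [hα]

end Aux3

section Aux4

variable {V : Type*} [NormedAddCommGroup V] [InnerProductSpace ℝ V]
variable {Φ : Set V} {Δ : Finset V}

theorem sum_indicator_smul [DecidableEq V] (Δ : Finset V) {α : V} (hα : α ∈ Δ) (t : ℝ) :
    ∑ v ∈ Δ, (if v = α then t else 0) • v = t • α := by
  have h : ∀ v ∈ Δ, (if v = α then t else 0) • v = if v = α then t • v else 0 := by
    intro v _; split <;> simp
  rw [Finset.sum_congr rfl h, Finset.sum_ite_eq' Δ α (fun v => t • v), if_pos hα]

/-- A positive root proportional to a simple root has positive coefficient. -/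
theorem pos_smul_coeff (h0 : (0 : V) ∉ Φ)
    (hli : LinearIndependent ℝ (fun x : Δ => (x : V)))
    {α β : V} (hα : α ∈ Δ) (hβ : isPositiveRoot Φ Δ β) {t : ℝ} (ht : β = t • α) :
    0 < t := by
  classical
  obtain ⟨hβΦ, c, hc, hcn⟩ := hβ
  have hβne : β ≠ 0 := fun he => h0 (he ▸ hβΦ)
  have hsum : ∑ v ∈ Δ, (c v : ℝ) • v = ∑ v ∈ Δ, (if v = α then t else 0) • v := by
    rw [sum_indicator_smul Δ hα t, ← hc, ← ht]
  have key := coeff_unique hli hsum α hα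
  rw [if_pos rfl] at key
  have h1 : (0:ℝ) ≤ (c α : ℝ) := by exact_mod_cast hcn α hα
  rcases lt_or_eq_of_le (key ▸ h1) with h | h
  · exact h
  · exfalso; exact hβne (by rw [ht, ← h, zero_smul])

/-- key lemma: a simple reflection maps positive roots other than (multiples of) the
simple root to positive roots. -/
theorem simple_sref_pos (h0 : (0 : V) ∉ Φ)
    (hrefl : ∀ α ∈ Φ, ∀ β ∈ Φ, β - (2 * ⟪β, α⟫ / ⟪α, α⟫) • α ∈ Φ)
    (hbase : ∀ γ ∈ Φ, ∃ c : V → ℤ,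
      γ = ∑ v ∈ Δ, (c v : ℝ) • v ∧ ((∀ v ∈ Δ, 0 ≤ c v) ∨ (∀ v ∈ Δ, c v ≤ 0)))
    (hli : LinearIndependent ℝ (fun x : Δ => (x : V)))
    (hΔΦ : (Δ : Set V) ⊆ Φ)
    {α β : V} (hα : α ∈ Δ) (hβ : isPositiveRoot Φ Δ β) (hno : ∀ t : ℝ, β ≠ t • α) :
    isPositiveRoot Φ Δ (sref α β) := by
  classical
  obtain ⟨hβΦ, c, hc, hcn⟩ := hβ
  have hsΦ : sref α β ∈ Φ := by
    rw [sref_apply]; exact hrefl α (hΔΦ hα) β hβΦ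
  have hv0 : ∃ v₀ ∈ Δ, v₀ ≠ α ∧ 0 < c v₀ := by
    by_contra hcon
    push_neg at hcon
    apply hno (c α : ℝ)
    rw [hc]
    apply Finset.sum_eq_single_of_mem α hα
    intro v hv hvne
    have h1 := hcn v hv
    have h2 := hcon v hv hvne
    have : c v = 0 := le_antisymm h2 h1
    rw [this]; simp
  obtain ⟨v₀, hv₀Δ, hv₀ne, hv₀pos⟩ := hv0
  rcases root_pos_or_neg h0 hrefl hbase hsΦ with hp | hn
  · exact hp
  · exfalso
    obtain ⟨_, d, hd, hdn⟩ := hn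
    have he : sref α β = ∑ v ∈ Δ, ((c v : ℝ) - if v = α then 2 * ⟪β,α⟫ / ⟪α,α⟫ else 0) • v := by
      have h4 : ∀ v ∈ Δ, ((c v : ℝ) - if v = α then 2 * ⟪β,α⟫ / ⟪α,α⟫ else 0) • v
          = (c v : ℝ) • v - (if v = α then 2 * ⟪β,α⟫ / ⟪α,α⟫ else 0) • v := by
        intro v _; rw [sub_smul]
      rw [Finset.sum_congr rfl h4, Finset.sum_sub_distrib,
        sum_indicator_smul Δ hα (2 * ⟪β,α⟫ / ⟪α,α⟫), sref_apply, hc]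
    have he2 : sref α β = ∑ v ∈ Δ, (-(d v : ℝ)) • v := by
      have h5 : ∑ v ∈ Δ, (-(d v : ℝ)) • v = -∑ v ∈ Δ, ((d v : ℝ)) • v := by
        rw [← Finset.sum_neg_distrib]
        exact Finset.sum_congr rfl (fun v _ => by rw [neg_smul])
      rw [h5, ← hd, neg_neg]
    have key := coeff_unique hli (he.symm.trans he2) v₀ hv₀Δ
    rw [if_neg hv₀ne, sub_zero] at key
    have h6 : (0:ℝ) < (c v₀ : ℝ) := by exact_mod_cast hv₀pos
    have h7 : (0:ℝ) ≤ (d v₀ : ℝ) := by exact_mod_cast hdn v₀ hv₀Δ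
    linarith

/-- a root that is a nonnegative integer combination of positive roots is positive -/
theorem pos_combo (F : Finset V) (p : V → V) (n : V → ℤ) {x : V} (hx : x ∈ Φ)
    (hp : ∀ a ∈ F, isPositiveRoot Φ Δ (p a)) (hn : ∀ a ∈ F, 0 ≤ n a)
    (hsum : x = ∑ a ∈ F, (n a : ℝ) • p a) : isPositiveRoot Φ Δ x := by
  classical
  choose! c hc hcpos using fun a (ha : a ∈ F) => (hp a ha).2
  refine ⟨hx, fun v => ∑ a ∈ F, n a * c a v, ?_, ?_⟩
  · rw [hsum]
    rw [Finset.sum_congr rfl (fun a ha => by rw [hc a ha, Finset.smul_sum])]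
    rw [Finset.sum_comm]
    apply Finset.sum_congr rfl
    intro v _
    have h8 : ∀ a ∈ F, (n a : ℝ) • ((c a v : ℝ) • v) = ((n a * c a v : ℤ) : ℝ) • v := by
      intro a _
      rw [smul_smul]
      push_cast
      ring_nf
    rw [Finset.sum_congr rfl h8, ← Finset.sum_smul]
    congr 1
    push_cast
    rfl
  · intro v hv
    apply Finset.sum_nonneg
    intro a ha
    exact mul_nonneg (hn a ha) (hcpos a ha v hv)

/-- a positive root lying in the span of `T ⊆ Δ` is a nonneg integer combination of `T` -/
theorem pos_supported (hli : LinearIndependent ℝ (fun x : Δ => (x : V)))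
    {T : Finset V} (hTΔ : T ⊆ Δ) {x : V} (hx : isPositiveRoot Φ Δ x)
    (hsp : x ∈ Submodule.span ℝ (T : Set V)) :
    ∃ n : V → ℤ, (∀ a ∈ T, 0 ≤ n a) ∧ x = ∑ a ∈ T, (n a : ℝ) • a := by
  classical
  obtain ⟨hxΦ, c, hc, hcn⟩ := hx
  obtain ⟨f, -, hf⟩ := Submodule.mem_span_finset.1 hsp
  have hg : ∑ v ∈ Δ, (if v ∈ T then f v else 0) • v = ∑ v ∈ Δ, (c v : ℝ) • v := by
    rw [← hc, ← hf]
    have hz : ∀ v ∈ Δ, v ∉ T → (if v ∈ T then f v else 0) • v = 0 :=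
      fun v _ hvT => by rw [if_neg hvT, zero_smul]
    rw [← Finset.sum_subset hTΔ hz]
    exact Finset.sum_congr rfl (fun v hv => by rw [if_pos hv])
  have key := coeff_unique hli hg
  refine ⟨c, fun a ha => hcn a (hTΔ ha), ?_⟩
  rw [hc]
  have hz2 : ∀ v ∈ Δ, v ∉ T → (c v : ℝ) • v = 0 := by
    intro v hv hvT
    have := key v hv
    rw [if_neg hvT] at this
    rw [← this, zero_smul]
  exact (Finset.sum_subset hTΔ hz2).symm

end Aux4

section Aux5

variable {V : Type*} [NormedAddCommGroup V] [InnerProductSpace ℝ V]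
variable {Φ : Set V} {Δ : Finset V}

theorem srP_singleton (a : V) : srP [a] = sref a := by simp [srP]

theorem inner_self_pos' {x : V} (hx : x ≠ 0) : 0 < ⟪x, x⟫ := by
  have h1 : ⟪x, x⟫ ≠ 0 := by simpa using (inner_self_ne_zero (𝕜 := ℝ)).2 hx
  exact lt_of_le_of_ne real_inner_self_nonneg (Ne.symm h1)

theorem pos_inner_nonneg {x : V} (hx : isPositiveRoot Φ Δ x) (lam : V)
    (h : ∀ α ∈ Δ, 0 ≤ ⟪α, lam⟫) : 0 ≤ ⟪x, lam⟫ := by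
  obtain ⟨_, c, hc, hcn⟩ := hx
  rw [hc, sum_inner]
  apply Finset.sum_nonneg
  intro v hv
  rw [real_inner_smul_left]
  exact mul_nonneg (by exact_mod_cast hcn v hv) (h v hv)

theorem sref_decomp_pos (h0 : (0 : V) ∉ Φ)
    (hrefl : ∀ α ∈ Φ, ∀ β ∈ Φ, β - (2 * ⟪β, α⟫ / ⟪α, α⟫) • α ∈ Φ)
    (hcrys : ∀ α ∈ Φ, ∀ β ∈ Φ, ∃ k : ℤ, 2 * ⟪β, α⟫ / ⟪α, α⟫ = (k : ℝ))
    (hbase : ∀ γ ∈ Φ, ∃ c : V → ℤ,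
      γ = ∑ v ∈ Δ, (c v : ℝ) • v ∧ ((∀ v ∈ Δ, 0 ≤ c v) ∨ (∀ v ∈ Δ, c v ≤ 0)))
    (hli : LinearIndependent ℝ (fun x : Δ => (x : V)))
    (hΔΦ : (Δ : Set V) ⊆ Φ) :
    ∀ N : ℕ, ∀ β : V, ∀ c : V → ℤ, isPositiveRoot Φ Δ β →
      β = ∑ v ∈ Δ, (c v : ℝ) • v → (∀ v ∈ Δ, 0 ≤ c v) → (∑ v ∈ Δ, c v) ≤ (N : ℤ) →
      ∃ l : List V, (∀ a ∈ l, a ∈ Δ) ∧ sref β = srP l := by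
  classical
  intro N
  induction N using Nat.strong_induction_on with
  | _ N IH =>
  intro β c hβ hc hcn hsum
  have hβΦ : β ∈ Φ := hβ.1
  have hβne : β ≠ 0 := pos_ne_zero h0 hβ
  -- find a simple root pairing positively with β
  have hex : ∃ α ∈ Δ, 0 < ⟪β, α⟫ := by
    by_contra hcon
    push_neg at hcon
    have hββ : 0 < ⟪β, β⟫ := inner_self_pos' hβne
    have hle : ⟪β, β⟫ ≤ 0 := by
      nth_rewrite 1 [hc]
      rw [sum_inner]
      apply Finset.sum_nonpos
      intro v hv
      rw [real_inner_smul_left]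
      have h1 : (0:ℝ) ≤ (c v : ℝ) := by exact_mod_cast hcn v hv
      have h2 : ⟪v, β⟫ ≤ 0 := by rw [real_inner_comm]; exact hcon v hv
      exact mul_nonpos_of_nonneg_of_nonpos h1 h2
    linarith
  obtain ⟨α, hα, hβα⟩ := hex
  have hαΦ : α ∈ Φ := hΔΦ hα
  have hαne : α ≠ 0 := fun h => h0 (h ▸ hαΦ)
  by_cases hprop : ∃ t : ℝ, β = t • α
  · obtain ⟨t, ht⟩ := hprop
    have htne : t ≠ 0 := fun h => hβne (by rw [ht, h, zero_smul])
    exact ⟨[α], by simp [hα], by rw [ht, sref_smul α htne, srP_singleton]⟩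
  · push_neg at hprop
    have hγpos : isPositiveRoot Φ Δ (sref α β) :=
      simple_sref_pos h0 hrefl hbase hli hΔΦ hα hβ hprop
    obtain ⟨kz, hk⟩ := hcrys α hαΦ β hβΦ
    have hαα : 0 < ⟪α, α⟫ := inner_self_pos' hαne
    have hkz : 0 < kz := by
      have h1 : (0:ℝ) < (kz : ℝ) := by
        rw [← hk]
        exact div_pos (by linarith) hαα
      exact_mod_cast h1
    set c' : V → ℤ := fun v => c v - if v = α then kz else 0 with hc'def
    have hγc : sref α β = ∑ v ∈ Δ, (c' v : ℝ) • v := by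
      have hcast : ∀ v ∈ Δ, ((c' v : ℝ)) • v
          = (c v : ℝ) • v - (if v = α then (kz : ℝ) else 0) • v := by
        intro v _
        rw [← sub_smul]
        congr 1
        simp only [hc'def]
        split <;> push_cast <;> ring
      rw [Finset.sum_congr rfl hcast, Finset.sum_sub_distrib,
        sum_indicator_smul Δ hα ((kz : ℝ)), sref_apply, hk, hc]
    have hc'n : ∀ v ∈ Δ, 0 ≤ c' v := by
      obtain ⟨_, d, hd, hdn⟩ := hγpos
      have key := coeff_unique hli (hγc.symm.trans hd)
      intro v hv
      have h1 : (c' v : ℝ) = (d v : ℝ) := key v hv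
      have h2 : c' v = d v := by exact_mod_cast h1
      rw [h2]; exact hdn v hv
    have hsum' : ∑ v ∈ Δ, c' v = (∑ v ∈ Δ, c v) - kz := by
      simp only [hc'def]
      rw [Finset.sum_sub_distrib, Finset.sum_ite_eq' Δ α (fun _ => kz), if_pos hα]
    have hNpos : 1 ≤ N := by
      have h1 : 1 ≤ ∑ v ∈ Δ, c v := by
        rcases (Finset.sum_nonneg hcn).lt_or_eq with h | h
        · omega
        · exfalso
          apply hβne
          rw [hc]
          apply Finset.sum_eq_zero
          intro v hv
          have := (Finset.sum_eq_zero_iff_of_nonneg hcn).1 h.symm v hv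
          rw [this]; simp
      have h2 : (1:ℤ) ≤ (N:ℤ) := le_trans h1 hsum
      exact_mod_cast h2
    obtain ⟨l', hl', he'⟩ := IH (N - 1) (by omega) (sref α β) c' hγpos hγc hc'n (by
      rw [hsum']
      have : ((N - 1 : ℕ) : ℤ) = (N : ℤ) - 1 := by
        have : (1:ℕ) ≤ N := hNpos
        push_cast [Nat.cast_sub this]
        ring
      omega)
    have h9 : sref α (sref α β) = β := sref_invol α β
    have h10 : sref β = sref α * sref (sref α β) * (sref α)⁻¹ := by
      conv_lhs => rw [← h9]
      exact sref_conj (sref α) (sref α β)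
    refine ⟨α :: (l' ++ [α]), ?_, ?_⟩
    · intro a ha
      rcases List.mem_cons.1 ha with h | h
      · rw [h]; exact hα
      · rcases List.mem_append.1 h with h | h
        · exact hl' a h
        · rw [List.mem_singleton.1 h]; exact hα
    · rw [h10, he', sref_inv, srP_cons, srP_append, srP_singleton, mul_assoc]

theorem sref_decomp (h0 : (0 : V) ∉ Φ)
    (hrefl : ∀ α ∈ Φ, ∀ β ∈ Φ, β - (2 * ⟪β, α⟫ / ⟪α, α⟫) • α ∈ Φ)
    (hcrys : ∀ α ∈ Φ, ∀ β ∈ Φ, ∃ k : ℤ, 2 * ⟪β, α⟫ / ⟪α, α⟫ = (k : ℝ))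
    (hbase : ∀ γ ∈ Φ, ∃ c : V → ℤ,
      γ = ∑ v ∈ Δ, (c v : ℝ) • v ∧ ((∀ v ∈ Δ, 0 ≤ c v) ∨ (∀ v ∈ Δ, c v ≤ 0)))
    (hli : LinearIndependent ℝ (fun x : Δ => (x : V)))
    (hΔΦ : (Δ : Set V) ⊆ Φ)
    {β : V} (hβ : β ∈ Φ) :
    ∃ l : List V, (∀ a ∈ l, a ∈ Δ) ∧ sref β = srP l := by
  rcases root_pos_or_neg h0 hrefl hbase hβ with hp | hn
  · obtain ⟨c, hc, hcn⟩ := hp.2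
    exact sref_decomp_pos h0 hrefl hcrys hbase hli hΔΦ (∑ v ∈ Δ, c v).toNat β c hp hc hcn
      (Int.self_le_toNat _)
  · obtain ⟨c, hc, hcn⟩ := hn.2
    obtain ⟨l, hl, he⟩ := sref_decomp_pos h0 hrefl hcrys hbase hli hΔΦ
      (∑ v ∈ Δ, c v).toNat (-β) c hn hc hcn (Int.self_le_toNat _)
    exact ⟨l, hl, by rw [← sref_neg β, he]⟩

theorem srP_to_simple (h0 : (0 : V) ∉ Φ)
    (hrefl : ∀ α ∈ Φ, ∀ β ∈ Φ, β - (2 * ⟪β, α⟫ / ⟪α, α⟫) • α ∈ Φ)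
    (hcrys : ∀ α ∈ Φ, ∀ β ∈ Φ, ∃ k : ℤ, 2 * ⟪β, α⟫ / ⟪α, α⟫ = (k : ℝ))
    (hbase : ∀ γ ∈ Φ, ∃ c : V → ℤ,
      γ = ∑ v ∈ Δ, (c v : ℝ) • v ∧ ((∀ v ∈ Δ, 0 ≤ c v) ∨ (∀ v ∈ Δ, c v ≤ 0)))
    (hli : LinearIndependent ℝ (fun x : Δ => (x : V)))
    (hΔΦ : (Δ : Set V) ⊆ Φ) :
    ∀ l : List V, (∀ a ∈ l, a ∈ Φ) → ∃ L : List V, (∀ a ∈ L, a ∈ Δ) ∧ srP l = srP L := by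
  intro l
  induction l with
  | nil => exact fun _ => ⟨[], by simp, rfl⟩
  | cons a l ih =>
    intro hl
    obtain ⟨L', hL', he'⟩ := ih (fun x hx => hl x (by simp [hx]))
    obtain ⟨la, hla, hea⟩ := sref_decomp h0 hrefl hcrys hbase hli hΔΦ (hl a (by simp))
    refine ⟨la ++ L', ?_, ?_⟩
    · intro x hx
      rcases List.mem_append.1 hx with h | h
      · exact hla x h
      · exact hL' x h
    · rw [srP_cons, hea, he', srP_append]

end Aux5

section Aux6

variable {V : Type*} [NormedAddCommGroup V] [InnerProductSpace ℝ V]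
variable {Φ : Set V} {Δ : Finset V}

theorem exists_dominant (hfin : Φ.Finite) (h0 : (0 : V) ∉ Φ)
    (hrefl : ∀ α ∈ Φ, ∀ β ∈ Φ, β - (2 * ⟪β, α⟫ / ⟪α, α⟫) • α ∈ Φ)
    (hbase : ∀ γ ∈ Φ, ∃ c : V → ℤ,
      γ = ∑ v ∈ Δ, (c v : ℝ) • v ∧ ((∀ v ∈ Δ, 0 ≤ c v) ∨ (∀ v ∈ Δ, c v ≤ 0)))
    (hli : LinearIndependent ℝ (fun x : Δ => (x : V)))
    (hΔΦ : (Δ : Set V) ⊆ Φ) (lam : V) (hregl : ∀ β ∈ Φ, ⟪β, lam⟫ ≠ 0) :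
    ∃ l : List V, (∀ a ∈ l, a ∈ Δ) ∧
      ∀ β, isPositiveRoot Φ Δ β → 0 < ⟪β, srP l lam⟫ := by
  classical
  suffices h : ∀ N : ℕ, ∀ lam : V, (∀ β ∈ Φ, ⟪β, lam⟫ ≠ 0) →
      (hfin.toFinset.filter (fun β => isPositiveRoot Φ Δ β ∧ ⟪β, lam⟫ < 0)).card ≤ N →
      ∃ l : List V, (∀ a ∈ l, a ∈ Δ) ∧ ∀ β, isPositiveRoot Φ Δ β → 0 < ⟪β, srP l lam⟫ by
    exact h _ lam hregl le_rfl
  intro N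
  induction N using Nat.strong_induction_on with
  | _ N IH =>
  intro lam hregl hcard
  by_cases hex : ∃ α ∈ Δ, ⟪α, lam⟫ < 0
  · obtain ⟨α, hα, hαneg⟩ := hex
    have hαΦ : α ∈ Φ := hΔΦ hα
    have hαne : α ≠ 0 := fun h => h0 (h ▸ hαΦ)
    have hadj : ∀ x : V, ⟪x, sref α lam⟫ = ⟪sref α x, lam⟫ := fun x => (sref_adj α x lam).symm
    set A := hfin.toFinset.filter (fun β => isPositiveRoot Φ Δ β ∧ ⟪β, lam⟫ < 0) with hA
    set A' := hfin.toFinset.filter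
      (fun β => isPositiveRoot Φ Δ β ∧ ⟪β, sref α lam⟫ < 0) with hA'
    have hmaps : ∀ β ∈ A', sref α β ∈ A.erase α := by
      intro β hβA'
      rw [hA', Finset.mem_filter, Set.Finite.mem_toFinset] at hβA'
      have hβΦ : β ∈ Φ := hβA'.1
      have hβpos : isPositiveRoot Φ Δ β := hβA'.2.1
      have hβneg : ⟪β, sref α lam⟫ < 0 := hβA'.2.2
      rw [hadj] at hβneg
      have hspos : isPositiveRoot Φ Δ (sref α β) := by
        by_cases hprop : ∃ t : ℝ, β = t • α
        · exfalso
          obtain ⟨t, ht⟩ := hprop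
          have htpos : 0 < t := pos_smul_coeff h0 hli hα hβpos ht
          rw [ht, map_smul, sref_self hαne] at hβneg
          rw [real_inner_smul_left, inner_neg_left] at hβneg
          nlinarith
        · push_neg at hprop
          exact simple_sref_pos h0 hrefl hbase hli hΔΦ hα hβpos hprop
      rw [Finset.mem_erase]
      constructor
      · intro heq
        have hβeq : β = -α := by
          have := sref_invol α β
          rw [heq] at this
          rw [← this, sref_self hαne]
        rw [hβeq] at hβpos
        exact not_pos_both h0 hli (pos_of_mem_base hΔΦ hα) hβpos
      · rw [hA, Finset.mem_filter, Set.Finite.mem_toFinset]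
        exact ⟨hspos.1, hspos, hβneg⟩
    have hcard' : A'.card < A.card := by
      have h1 : A'.card ≤ (A.erase α).card :=
        Finset.card_le_card_of_injOn (sref α) hmaps
          (fun x _ y _ h => (sref α).injective h)
      have hαA : α ∈ A := by
        rw [hA, Finset.mem_filter, Set.Finite.mem_toFinset]
        exact ⟨hαΦ, pos_of_mem_base hΔΦ hα, hαneg⟩
      have h2 : (A.erase α).card = A.card - 1 := Finset.card_erase_of_mem hαA
      have h3 : 0 < A.card := Finset.card_pos.2 ⟨α, hαA⟩
      omega
    have hreg' : ∀ β ∈ Φ, ⟪β, sref α lam⟫ ≠ 0 := by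
      intro β hβ
      rw [hadj]
      apply hregl
      rw [sref_apply]
      exact hrefl α hαΦ β hβ
    obtain ⟨l', hl', hdom⟩ := IH A'.card (lt_of_lt_of_le hcard' hcard)
      (sref α lam) hreg' le_rfl
    refine ⟨l' ++ [α], ?_, ?_⟩
    · intro a ha
      rcases List.mem_append.1 ha with h | h
      · exact hl' a h
      · rw [List.mem_singleton.1 h]; exact hα
    · intro β hβ
      rw [srP_append_apply, srP_singleton]
      exact hdom β hβ
  · push_neg at hex
    refine ⟨[], by simp, ?_⟩
    intro β hβ
    have h1 : 0 ≤ ⟪β, lam⟫ := pos_inner_nonneg hβ lam (fun a ha => hex a ha)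
    have h2 : ⟪β, lam⟫ ≠ 0 := hregl β hβ.1
    have : srP ([] : List V) lam = lam := by rw [srP_nil]; rfl
    rw [this]
    exact lt_of_le_of_ne h1 (Ne.symm h2)

theorem crossing (h0 : (0 : V) ∉ Φ)
    (hrefl : ∀ α ∈ Φ, ∀ β ∈ Φ, β - (2 * ⟪β, α⟫ / ⟪α, α⟫) • α ∈ Φ)
    (hΔΦ : (Δ : Set V) ⊆ Φ) :
    ∀ m : List V, (∀ a ∈ m, a ∈ Δ) → ∀ β, isPositiveRoot Φ Δ β →
      ¬ isPositiveRoot Φ Δ (srP m β) →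
      ∃ m₁ a m₂, m = m₁ ++ a :: m₂ ∧ isPositiveRoot Φ Δ (srP m₂ β) ∧
        ¬ isPositiveRoot Φ Δ (sref a (srP m₂ β)) := by
  intro m
  induction m with
  | nil =>
    intro _ β hβ hnβ
    exfalso
    apply hnβ
    have : srP ([] : List V) β = β := by rw [srP_nil]; rfl
    rw [this]
    exact hβ
  | cons a m' ih =>
    intro hm β hβ hnβ
    by_cases hγ : isPositiveRoot Φ Δ (srP m' β)
    · refine ⟨[], a, m', by simp, hγ, ?_⟩
      rw [← srP_cons_apply]
      exact hnβ
    · obtain ⟨m₁, b, m₂, heq, h1, h2⟩ := ih (fun x hx => hm x (by simp [hx])) β hβ hγ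
      exact ⟨a :: m₁, b, m₂, by rw [heq]; rfl, h1, h2⟩

theorem prods_pos_eq_one (h0 : (0 : V) ∉ Φ)
    (hrefl : ∀ α ∈ Φ, ∀ β ∈ Φ, β - (2 * ⟪β, α⟫ / ⟪α, α⟫) • α ∈ Φ)
    (hbase : ∀ γ ∈ Φ, ∃ c : V → ℤ,
      γ = ∑ v ∈ Δ, (c v : ℝ) • v ∧ ((∀ v ∈ Δ, 0 ≤ c v) ∨ (∀ v ∈ Δ, c v ≤ 0)))
    (hli : LinearIndependent ℝ (fun x : Δ => (x : V)))
    (hΔΦ : (Δ : Set V) ⊆ Φ) :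
    ∀ N : ℕ, ∀ l : List V, l.length ≤ N → (∀ a ∈ l, a ∈ Δ) →
      (∀ β, isPositiveRoot Φ Δ β → isPositiveRoot Φ Δ (srP l β)) → srP l = 1 := by
  intro N
  induction N with
  | zero =>
    intro l hlen _ _
    rw [List.length_eq_zero_iff.1 (Nat.le_zero.1 hlen)]
    rfl
  | succ N IH =>
    intro l hlen hlΔ hlpos
    rcases List.eq_nil_or_concat l with rfl | ⟨L, b, rfl⟩
    · rfl
    simp only [List.concat_eq_append] at hlen hlΔ hlpos ⊢
    have hbΔ : b ∈ Δ := hlΔ b (by simp)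
    have hbpos : isPositiveRoot Φ Δ b := pos_of_mem_base hΔΦ hbΔ
    have hbne : b ≠ 0 := pos_ne_zero h0 hbpos
    have hLΔ : ∀ a ∈ L, a ∈ Δ := fun a ha => hlΔ a (by simp [ha])
    have hδ : srP (L ++ [b]) b = -(srP L b) := by
      rw [srP_append_apply, srP_singleton, sref_self hbne, map_neg]
    have hnδ : ¬ isPositiveRoot Φ Δ (srP L b) := by
      intro hp
      have h1 : isPositiveRoot Φ Δ (srP (L ++ [b]) b) := hlpos b hbpos
      rw [hδ] at h1
      exact not_pos_both h0 hli hp h1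
    obtain ⟨m₁, a, m₂, heq, hγpos, hγneg⟩ := crossing h0 hrefl hΔΦ L hLΔ b hbpos hnδ
    have haΔ : a ∈ Δ := hLΔ a (by rw [heq]; simp)
    -- the flipped root must be proportional to a
    have hprop : ∃ t : ℝ, srP m₂ b = t • a := by
      by_contra hcon
      push_neg at hcon
      exact hγneg (simple_sref_pos h0 hrefl hbase hli hΔΦ haΔ hγpos hcon)
    obtain ⟨t, ht⟩ := hprop
    have htne : t ≠ 0 := by
      intro h
      apply pos_ne_zero h0 hγpos
      rw [ht, h, zero_smul]
    have hsg : sref (srP m₂ b) = sref a := by rw [ht, sref_smul a htne]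
    have hconj : sref (srP m₂ b) = srP m₂ * sref b * (srP m₂)⁻¹ := sref_conj (srP m₂) b
    have hkey : sref a * srP m₂ * sref b = srP m₂ := by
      calc sref a * srP m₂ * sref b
          = (srP m₂ * sref b * (srP m₂)⁻¹) * srP m₂ * sref b := by rw [← hconj, hsg]
        _ = srP m₂ * (sref b * sref b) := by group
        _ = srP m₂ := by rw [sref_mul_self, mul_one]
    have hre : srP (L ++ [b]) = srP (m₁ ++ m₂) := by
      rw [heq]
      rw [show (m₁ ++ a :: m₂) ++ [b] = m₁ ++ (a :: (m₂ ++ [b])) by simp]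
      rw [srP_append, srP_cons, srP_append, srP_singleton, srP_append]
      rw [show sref a * (srP m₂ * sref b) = sref a * srP m₂ * sref b by rw [mul_assoc]]
      rw [hkey]
    have hlen2 : (m₁ ++ m₂).length ≤ N := by
      have h1 : L.length = m₁.length + m₂.length + 1 := by rw [heq]; simp; omega
      have h2 : (L ++ [b]).length = L.length + 1 := by simp
      simp only [List.length_append]
      omega
    have hmem : ∀ x ∈ m₁ ++ m₂, x ∈ Δ := by
      intro x hx
      apply hLΔ x
      rw [heq]
      rcases List.mem_append.1 hx with h | h
      · exact List.mem_append.2 (Or.inl h)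
      · exact List.mem_append.2 (Or.inr (by simp [h]))
    have := IH (m₁ ++ m₂) hlen2 hmem (by rw [← hre]; exact hlpos)
    rw [hre, this]

end Aux6

section Aux7

variable {V : Type*} [NormedAddCommGroup V] [InnerProductSpace ℝ V]
variable {Φ : Set V} {Δ : Finset V}

theorem srP_inv_apply_self (l : List V) (x : V) : srP l ((srP l)⁻¹ x) = x := by
  rw [LinearIsometryEquiv.inv_def]
  exact (srP l).apply_symm_apply x

/-- The main general theorem: a Weyl group element preserving the chamber of a regular
element is the identity. -/
theorem fixes_chamber_eq_one (hfin : Φ.Finite) (h0 : (0 : V) ∉ Φ)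
    (hrefl : ∀ α ∈ Φ, ∀ β ∈ Φ, β - (2 * ⟪β, α⟫ / ⟪α, α⟫) • α ∈ Φ)
    (hcrys : ∀ α ∈ Φ, ∀ β ∈ Φ, ∃ k : ℤ, 2 * ⟪β, α⟫ / ⟪α, α⟫ = (k : ℝ))
    (hbase : ∀ γ ∈ Φ, ∃ c : V → ℤ,
      γ = ∑ v ∈ Δ, (c v : ℝ) • v ∧ ((∀ v ∈ Δ, 0 ≤ c v) ∨ (∀ v ∈ Δ, c v ≤ 0)))
    (hli : LinearIndependent ℝ (fun x : Δ => (x : V)))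
    (hΔΦ : (Δ : Set V) ⊆ Φ)
    {σ : V ≃ₗᵢ[ℝ] V} (hσ : σ ∈ weylGroup V Φ) (lam : V)
    (hregl : ∀ β ∈ Φ, ⟪β, lam⟫ ≠ 0)
    (hch : ∀ β ∈ Φ, (0 < ⟪β, lam⟫ ↔ 0 < ⟪β, σ lam⟫)) : σ = 1 := by
  -- write σ as a product of simple reflections
  obtain ⟨l₀, hl₀, he₀⟩ := weyl_eq_srP hσ
  obtain ⟨L, hL, heL⟩ := srP_to_simple h0 hrefl hcrys hbase hli hΔΦ l₀ hl₀
  have hσL : σ = srP L := he₀.trans heL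
  -- dominantize lam
  obtain ⟨lu, hlu, hdom⟩ := exists_dominant hfin h0 hrefl hbase hli hΔΦ lam hregl
  set u := srP lu with hu
  set tl : List V := lu ++ L ++ lu.reverse with htl
  have htlΔ : ∀ a ∈ tl, a ∈ Δ := by
    intro a ha
    rw [htl] at ha
    rcases List.mem_append.1 ha with h | h
    · rcases List.mem_append.1 h with h | h
      · exact hlu a h
      · exact hL a h
    · exact hlu a (List.mem_reverse.1 h)
  have htlΦ : ∀ a ∈ tl, a ∈ Φ := fun a ha => hΔΦ (htlΔ a ha)
  have hτ : srP tl = u * σ * u⁻¹ := by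
    rw [htl, srP_append, srP_append, ← srP_inv, hσL, hu]
  -- the conjugated element preserves positive roots
  have hposmap : ∀ β, isPositiveRoot Φ Δ β → isPositiveRoot Φ Δ (srP tl β) := by
    intro β hβ
    have hβΦ : β ∈ Φ := hβ.1
    have hτβΦ : srP tl β ∈ Φ := srP_maps hrefl tl htlΦ β hβΦ
    have hδΦ : (u⁻¹ : V ≃ₗᵢ[ℝ] V) β ∈ Φ := by
      rw [srP_inv]
      exact srP_maps hrefl lu.reverse (fun a ha => hΔΦ (hlu a (List.mem_reverse.1 ha))) β hβΦ
    have hσδΦ : σ ((u⁻¹ : V ≃ₗᵢ[ℝ] V) β) ∈ Φ := weyl_maps hrefl hσ _ hδΦ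
    have hval : ⟪srP tl β, u lam⟫ = ⟪σ ((u⁻¹ : V ≃ₗᵢ[ℝ] V) β), lam⟫ := by
      rw [hτ]
      rw [show (u * σ * u⁻¹) β = u (σ ((u⁻¹ : V ≃ₗᵢ[ℝ] V) β)) from rfl]
      rw [← u.inner_map_map (σ ((u⁻¹ : V ≃ₗᵢ[ℝ] V) β)) lam]
    have hpos2 : 0 < ⟪σ ((u⁻¹ : V ≃ₗᵢ[ℝ] V) β), lam⟫ := by
      -- chamber condition at root σ(u⁻¹ β)... we need the other form
      have h1 : ⟪σ ((u⁻¹ : V ≃ₗᵢ[ℝ] V) β), σ lam⟫ = ⟪(u⁻¹ : V ≃ₗᵢ[ℝ] V) β, lam⟫ :=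
        σ.inner_map_map _ _
      have h2 : ⟪(u⁻¹ : V ≃ₗᵢ[ℝ] V) β, lam⟫ = ⟪β, u lam⟫ := by
        rw [← u.inner_map_map ((u⁻¹ : V ≃ₗᵢ[ℝ] V) β) lam, srP_inv_apply_self]
      have h3 : 0 < ⟪β, u lam⟫ := hdom β hβ
      have := (hch _ hσδΦ).2 (by rw [h1, h2]; exact h3)
      exact this
    rw [← hval] at hpos2
    rcases root_pos_or_neg h0 hrefl hbase hτβΦ with hp | hn
    · exact hp
    · exfalso
      have h4 : 0 < ⟪-(srP tl β), u lam⟫ := hdom _ hn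
      rw [inner_neg_left] at h4
      linarith
  have hτ1 : srP tl = 1 :=
    prods_pos_eq_one h0 hrefl hbase hli hΔΦ tl.length tl le_rfl htlΔ hposmap
  rw [hτ1] at hτ
  calc σ = u⁻¹ * (u * σ * u⁻¹) * u := by group
    _ = 1 := by rw [← hτ]; group

end Aux7

section Aux8

variable {V : Type*} [NormedAddCommGroup V] [InnerProductSpace ℝ V]

theorem exists_dual_vector_finset [FiniteDimensional ℝ V] {Δ T : Finset V}
    (hT : T ⊆ Δ) (hli : LinearIndependent ℝ (fun x : Δ => (x : V))) :
    ∃ v : V, ∀ α ∈ T, ⟪α, v⟫ = 1 := by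
  classical
  have hliT : LinearIndependent ℝ (fun x : T => (x : V)) := by
    have hinj : Function.Injective (fun x : T => (⟨(x : V), hT x.2⟩ : Δ)) := by
      intro a b h
      exact Subtype.ext (Subtype.mk_eq_mk.1 h)
    exact hli.comp (fun x : T => (⟨(x : V), hT x.2⟩ : Δ)) hinj
  set W := Submodule.span ℝ ((T : Set V)) with hW
  have hFsp : ∀ (x : W), (∀ α ∈ T, ⟪α, (x : V)⟫ = 0) → x = 0 := by
    intro x hx
    have horth : ∀ y ∈ W, ⟪y, (x : V)⟫ = 0 := by
      intro y hy
      induction hy using Submodule.span_induction with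
      | mem z hz => exact hx z hz
      | zero => simp
      | add a b _ _ ha hb => rw [inner_add_left, ha, hb, add_zero]
      | smul r a _ ha => rw [real_inner_smul_left, ha, mul_zero]
    have h3 : ⟪(x : V), (x : V)⟫ = 0 := horth (x : V) x.2
    have h4 : (x : V) = 0 := by
      by_contra hne
      exact (ne_of_gt (inner_self_pos' hne)) h3
    exact Subtype.ext h4
  let F : W →ₗ[ℝ] (T → ℝ) :=
    { toFun := fun x α => ⟪(α : V), (x : V)⟫
      map_add' := fun x y => by funext α; simp [inner_add_right]
      map_smul' := fun r x => by funext α; simp [real_inner_smul_right] }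
  have hFinj : Function.Injective F := by
    rw [← LinearMap.ker_eq_bot, LinearMap.ker_eq_bot']
    intro x hx
    apply hFsp
    intro α hα
    have := congrFun hx ⟨α, hα⟩
    simpa [F] using this
  have hrank : Module.finrank ℝ W = Module.finrank ℝ (T → ℝ) := by
    have h1 : Module.finrank ℝ W = T.card := by
      have h2 : Set.range (fun x : T => (x : V)) = (T : Set V) := by
        rw [Subtype.range_coe_subtype]
        exact Finset.setOf_mem
      have h3 := finrank_span_eq_card hliT
      rw [h2] at h3
      rw [hW, h3, Fintype.card_coe]
    rw [h1, Module.finrank_pi, Fintype.card_coe]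
  have hFsurj : Function.Surjective F :=
    (LinearMap.injective_iff_surjective_of_finrank_eq_finrank hrank).1 hFinj
  obtain ⟨x, hx⟩ := hFsurj (fun _ => 1)
  refine ⟨(x : V), ?_⟩
  intro α hα
  have := congrFun hx ⟨α, hα⟩
  simpa [F] using this

theorem sign_helper {a b : ℝ} (h : |b| < |a|) : ((0 < a + b) ↔ 0 < a) ∧ a + b ≠ 0 := by
  have h1 : b ≤ |b| := le_abs_self b
  have h2 : -|b| ≤ b := neg_abs_le b
  rcases le_or_gt 0 a with ha | ha
  · rw [abs_of_nonneg ha] at h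
    constructor
    · constructor
      · intro _; linarith [abs_nonneg b]
      · intro _; linarith
    · intro hc; rw [abs_lt] at h; linarith
  · rw [abs_of_neg ha] at h
    constructor
    · constructor
      · intro hc; rw [abs_lt] at h; linarith
      · intro hc; linarith
    · intro hc; rw [abs_lt] at h; linarith

end Aux8

/-- For a regular element `H` and distinct Weyl elements `w' ≠ w` as in the lemma on
meromorphic continuation of intertwining operators, `w'⁻¹H − w⁻¹H ∉ span S`. -/
theorem stmt_9 {V : Type*} [NormedAddCommGroup V] [InnerProductSpace ℝ V]
    [FiniteDimensional ℝ V]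
    -- `Φ` is a crystallographic root system
    (Φ : Set V) (hfin : Φ.Finite) (h0 : (0 : V) ∉ Φ)
    (hrefl : ∀ α ∈ Φ, ∀ β ∈ Φ, β - (2 * ⟪β, α⟫ / ⟪α, α⟫) • α ∈ Φ)
    (hcrys : ∀ α ∈ Φ, ∀ β ∈ Φ, ∃ k : ℤ, 2 * ⟪β, α⟫ / ⟪α, α⟫ = (k : ℝ))
    -- with base `Δ`
    (Δ : Finset V) (hΔΦ : (Δ : Set V) ⊆ Φ)
    (hli : LinearIndependent ℝ (fun x : Δ => (x : V)))
    (hbase : ∀ γ ∈ Φ, ∃ c : V → ℤ,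
      γ = ∑ v ∈ Δ, (c v : ℝ) • v ∧ ((∀ v ∈ Δ, 0 ≤ c v) ∨ (∀ v ∈ Δ, c v ≤ 0)))
    (S T : Finset V) (hS : S ⊆ Δ) (hT : T ⊆ Δ)
    -- `H` is orthogonal to `T` and regular off `span T`
    (H : V) (hHT : ∀ α ∈ T, ⟪H, α⟫ = 0)
    (hreg : ∀ β ∈ Φ, β ∉ Submodule.span ℝ (T : Set V) → ⟪β, H⟫ ≠ 0)
    (w w' : V ≃ₗᵢ[ℝ] V) (hw : w ∈ weylGroup V Φ) (hw' : w' ∈ weylGroup V Φ)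
    (hwS : ∀ α ∈ S, isPositiveRoot Φ Δ (w α))
    (hwT : ∀ α ∈ T, isPositiveRoot Φ Δ (w⁻¹ α))
    (hwspan : w '' (Submodule.span ℝ (S : Set V) : Set V) =
      (Submodule.span ℝ (T : Set V) : Set V))
    (hne : w' ≠ w)
    (hw'S : ∀ α ∈ S, isPositiveRoot Φ Δ (w' α))
    (hw'T : ∀ α ∈ T, isPositiveRoot Φ Δ (w'⁻¹ α)) :
    w'⁻¹ H - w⁻¹ H ∉ Submodule.span ℝ (S : Set V) := by
  classical
  intro hmem
  set σ : V ≃ₗᵢ[ℝ] V := w * w'⁻¹ with hσdef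
  have hσW : σ ∈ weylGroup V Φ := mul_mem hw (inv_mem hw')
  have hσinvW : σ⁻¹ ∈ weylGroup V Φ := inv_mem hσW
  have hσapp : ∀ x : V, σ (σ⁻¹ x) = x := fun x => by
    rw [LinearIsometryEquiv.inv_def]; exact σ.apply_symm_apply x
  have hσinvapp : ∀ x : V, σ⁻¹ (σ x) = x := fun x => by
    rw [LinearIsometryEquiv.inv_def]; exact σ.symm_apply_apply x
  have horthH : ∀ x ∈ Submodule.span ℝ (T : Set V), ⟪x, H⟫ = 0 := by
    intro x hx
    induction hx using Submodule.span_induction with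
    | mem z hz => rw [real_inner_comm]; exact hHT z hz
    | zero => simp
    | add a b _ _ ha hb => rw [inner_add_left, ha, hb, add_zero]
    | smul r a _ ha => rw [real_inner_smul_left, ha, mul_zero]
  have hwinv : ∀ x : V, w (w⁻¹ x) = x := fun x => by
    rw [LinearIsometryEquiv.inv_def]; exact w.apply_symm_apply x
  -- Step A : σ fixes H
  have hσHspan : σ H - H ∈ Submodule.span ℝ (T : Set V) := by
    have h1 : σ H - H = w (w'⁻¹ H - w⁻¹ H) := by
      rw [map_sub, show σ H = w (w'⁻¹ H) from rfl, hwinv H]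
    rw [h1]
    have h2 : w (w'⁻¹ H - w⁻¹ H) ∈ w '' ((Submodule.span ℝ (S : Set V) : Set V)) :=
      Set.mem_image_of_mem w hmem
    rw [hwspan] at h2
    exact h2
  have hσH : σ H = H := by
    have ht0 : ⟪σ H - H, σ H - H⟫ = 0 := by
      have h1 : ⟪σ H, σ H⟫ = ⟪H, H⟫ := σ.inner_map_map H H
      have h2 : σ H = H + (σ H - H) := by abel
      rw [h2, real_inner_add_add_self] at h1
      have h3 : ⟪H, σ H - H⟫ = 0 := by
        rw [real_inner_comm]; exact horthH _ hσHspan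
      rw [h3] at h1
      linarith
    have h4 : σ H - H = 0 := inner_self_eq_zero.1 ht0
    have := sub_eq_zero.1 h4
    exact this
  have hσHi : σ⁻¹ H = H := by
    calc σ⁻¹ H = σ⁻¹ (σ H) := by rw [hσH]
      _ = H := hσinvapp H
  have hinnerHinv : ∀ x : V, ⟪σ⁻¹ x, H⟫ = ⟪x, H⟫ := fun x => by
    calc ⟪σ⁻¹ x, H⟫ = ⟪σ (σ⁻¹ x), σ H⟫ := (σ.inner_map_map _ _).symm
      _ = ⟪x, H⟫ := by rw [hσapp x, hσH]
  have hinnerHσ : ∀ x : V, ⟪σ x, H⟫ = ⟪x, H⟫ := fun x => by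
    have h1 : ⟪σ x, σ H⟫ = ⟪x, H⟫ := σ.inner_map_map x H
    rw [hσH] at h1
    exact h1
  have hzero_mem : ∀ β ∈ Φ, ⟪β, H⟫ = 0 → β ∈ Submodule.span ℝ (T : Set V) := by
    intro β hβ hz
    by_contra hn
    exact hreg β hβ hn hz
  have hwpre : ∀ x : V, w x ∈ Submodule.span ℝ (T : Set V) →
      x ∈ Submodule.span ℝ (S : Set V) := by
    intro x hx
    have h2 : w x ∈ w '' ((Submodule.span ℝ (S : Set V) : Set V)) := by
      rw [hwspan]; exact hx
    obtain ⟨y, hy, hxy⟩ := h2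
    have h3 : y = x := w.injective hxy
    rw [← h3]; exact hy
  have hw'inv : w'⁻¹ ∈ weylGroup V Φ := inv_mem hw'
  have hσmaps := weyl_maps hrefl hσW
  have hσinvmaps := weyl_maps hrefl hσinvW
  have hw'invmaps := weyl_maps hrefl hw'inv
  -- Key step: σ maps positive roots in span T to positive roots in span T
  have hKey : ∀ x, x ∈ Φ → x ∈ Submodule.span ℝ (T : Set V) → isPositiveRoot Φ Δ x →
      (σ x ∈ Φ ∧ σ x ∈ Submodule.span ℝ (T : Set V) ∧ isPositiveRoot Φ Δ (σ x)) := by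
    intro x hxΦ hxT hxP
    have hσxΦ : σ x ∈ Φ := hσmaps x hxΦ
    have hσxH : ⟪σ x, H⟫ = 0 := by rw [hinnerHσ x]; exact horthH x hxT
    have hσxT : σ x ∈ Submodule.span ℝ (T : Set V) := hzero_mem _ hσxΦ hσxH
    obtain ⟨n, hn, hxsum⟩ := pos_supported hli hT hxP hxT
    have hγ : w'⁻¹ x = ∑ a ∈ T, (n a : ℝ) • (w'⁻¹ a) := by
      rw [hxsum, map_sum]
      exact Finset.sum_congr rfl (fun a _ => map_smul _ _ _)
    have hγΦ : w'⁻¹ x ∈ Φ := hw'invmaps x hxΦ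
    have hγP : isPositiveRoot Φ Δ (w'⁻¹ x) :=
      pos_combo T (fun a => w'⁻¹ a) n hγΦ (fun a ha => hw'T a ha) hn hγ
    have hγS : w'⁻¹ x ∈ Submodule.span ℝ (S : Set V) := by
      apply hwpre
      rw [show w (w'⁻¹ x) = σ x from rfl]
      exact hσxT
    obtain ⟨m, hm, hγsum⟩ := pos_supported hli hS hγP hγS
    have hσx : σ x = ∑ a ∈ S, (m a : ℝ) • (w a) := by
      rw [show σ x = w (w'⁻¹ x) from rfl, hγsum, map_sum]
      exact Finset.sum_congr rfl (fun a _ => map_smul _ _ _)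
    exact ⟨hσxΦ, hσxT, pos_combo S (fun a => w a) m hσxΦ (fun a ha => hwS a ha) hm hσx⟩
  -- bijectivity on the finite set of positive roots in span T
  set K := hfin.toFinset.filter
    (fun x => x ∈ Submodule.span ℝ (T : Set V) ∧ isPositiveRoot Φ Δ x) with hKdef
  have hmapsK : ∀ x ∈ K, σ x ∈ K := by
    intro x hx
    rw [hKdef, Finset.mem_filter, Set.Finite.mem_toFinset] at hx
    obtain ⟨h1, h2, h3⟩ := hKey x hx.1 hx.2.1 hx.2.2
    rw [hKdef, Finset.mem_filter, Set.Finite.mem_toFinset]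
    exact ⟨h1, h2, h3⟩
  have himg : K.image σ = K := by
    apply Finset.eq_of_subset_of_card_le
    · intro y hy
      obtain ⟨x, hx, rfl⟩ := Finset.mem_image.1 hy
      exact hmapsK x hx
    · rw [Finset.card_image_of_injective K σ.injective]
  have hiffP : ∀ β, β ∈ Φ → β ∈ Submodule.span ℝ (T : Set V) →
      (isPositiveRoot Φ Δ β ↔ isPositiveRoot Φ Δ (σ⁻¹ β)) := by
    intro β hβ hβT
    have hδΦ : σ⁻¹ β ∈ Φ := hσinvmaps β hβ
    have hδT : σ⁻¹ β ∈ Submodule.span ℝ (T : Set V) :=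
      hzero_mem _ hδΦ (by rw [hinnerHinv β]; exact horthH β hβT)
    constructor
    · intro hp
      have hβK : β ∈ K := by
        rw [hKdef, Finset.mem_filter, Set.Finite.mem_toFinset]
        exact ⟨hβ, hβT, hp⟩
      rw [← himg] at hβK
      obtain ⟨x, hxK, hxe⟩ := Finset.mem_image.1 hβK
      have h5 : x = σ⁻¹ β := by rw [← hxe, hσinvapp x]
      rw [← h5]
      rw [hKdef, Finset.mem_filter] at hxK
      exact hxK.2.2
    · intro hp
      have := (hKey _ hδΦ hδT hp).2.2
      rw [hσapp β] at this
      exact this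
  -- dual vector for T
  obtain ⟨v, hv⟩ := exists_dual_vector_finset hT hli
  have hvpos : ∀ β, β ∈ Φ → β ∈ Submodule.span ℝ (T : Set V) → isPositiveRoot Φ Δ β →
      0 < ⟪β, v⟫ := by
    intro β hβ hβT hβP
    obtain ⟨n, hn, hsum⟩ := pos_supported hli hT hβP hβT
    have h1 : ⟪β, v⟫ = ∑ a ∈ T, (n a : ℝ) := by
      rw [hsum, sum_inner]
      exact Finset.sum_congr rfl (fun a ha => by
        rw [real_inner_smul_left, hv a ha, mul_one])
    have h2 : (0:ℤ) ≤ ∑ a ∈ T, n a := Finset.sum_nonneg hn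
    rcases h2.lt_or_eq with h | h
    · rw [h1]
      have : (0:ℝ) < ((∑ a ∈ T, n a : ℤ) : ℝ) := by exact_mod_cast h
      push_cast at this
      exact this
    · exfalso
      apply pos_ne_zero h0 hβP
      rw [hsum]
      apply Finset.sum_eq_zero
      intro a ha
      have := (Finset.sum_eq_zero_iff_of_nonneg hn).1 h.symm a ha
      rw [this]; simp
  have hvchar : ∀ β, β ∈ Φ → β ∈ Submodule.span ℝ (T : Set V) →
      ((isPositiveRoot Φ Δ β ↔ 0 < ⟪β, v⟫) ∧ ⟪β, v⟫ ≠ 0) := by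
    intro β hβ hβT
    by_cases hp : isPositiveRoot Φ Δ β
    · have h1 := hvpos β hβ hβT hp
      exact ⟨⟨fun _ => h1, fun _ => hp⟩, ne_of_gt h1⟩
    · have hnp : isPositiveRoot Φ Δ (-β) :=
        (root_pos_or_neg h0 hrefl hbase hβ).resolve_left hp
      have h1 := hvpos (-β) (neg_mem_root h0 hrefl hβ) (neg_mem hβT) hnp
      rw [inner_neg_left] at h1
      refine ⟨⟨fun h => absurd h hp, fun h => absurd h (by linarith)⟩, by linarith⟩
  -- choice of epsilon
  obtain ⟨ε, hε0, hεb⟩ : ∃ ε : ℝ, 0 < ε ∧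
      ∀ γ ∈ Φ, γ ∉ Submodule.span ℝ (T : Set V) → ε * |⟪γ, v⟫| < |⟪γ, H⟫| := by
    set A := hfin.toFinset.filter (fun γ => γ ∉ Submodule.span ℝ (T : Set V)) with hAdef
    by_cases hA : A.Nonempty
    · refine ⟨A.inf' hA (fun γ => |⟪γ, H⟫| / (1 + |⟪γ, v⟫|)), ?_, ?_⟩
      · rw [Finset.lt_inf'_iff]
        intro γ hγ
        rw [hAdef, Finset.mem_filter, Set.Finite.mem_toFinset] at hγ
        have h2 : 0 < |⟪γ, H⟫| := abs_pos.2 (hreg γ hγ.1 hγ.2)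
        have h3 : (0:ℝ) < 1 + |⟪γ, v⟫| := by linarith [abs_nonneg ⟪γ, v⟫]
        exact div_pos h2 h3
      · intro γ hγΦ hγT
        have hγA : γ ∈ A := by
          rw [hAdef, Finset.mem_filter, Set.Finite.mem_toFinset]
          exact ⟨hγΦ, hγT⟩
        have h1 := Finset.inf'_le (fun γ => |⟪γ, H⟫| / (1 + |⟪γ, v⟫|)) hγA
        have h2 : 0 < |⟪γ, H⟫| := abs_pos.2 (hreg γ hγΦ hγT)
        have h3 : (0:ℝ) ≤ |⟪γ, v⟫| := abs_nonneg _
        calc A.inf' hA (fun γ => |⟪γ, H⟫| / (1 + |⟪γ, v⟫|)) * |⟪γ, v⟫|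
            ≤ (|⟪γ, H⟫| / (1 + |⟪γ, v⟫|)) * |⟪γ, v⟫| :=
              mul_le_mul_of_nonneg_right h1 h3
          _ < |⟪γ, H⟫| := by
              rw [div_mul_eq_mul_div, div_lt_iff₀ (by linarith)]
              nlinarith
    · refine ⟨1, one_pos, fun γ hγΦ hγT => ?_⟩
      exfalso
      exact hA ⟨γ, by rw [hAdef, Finset.mem_filter, Set.Finite.mem_toFinset]; exact ⟨hγΦ, hγT⟩⟩
  set lam := H + ε • v with hlamdef
  have hexp : ∀ x : V, ⟪x, lam⟫ = ⟪x, H⟫ + ε * ⟪x, v⟫ := fun x => by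
    rw [hlamdef, inner_add_right, real_inner_smul_right]
  have habs : ∀ γ, γ ∈ Φ → γ ∉ Submodule.span ℝ (T : Set V) →
      |ε * ⟪γ, v⟫| < |⟪γ, H⟫| := by
    intro γ h1 h2
    rw [abs_mul, abs_of_pos hε0]
    exact hεb γ h1 h2
  have hreglam : ∀ β ∈ Φ, ⟪β, lam⟫ ≠ 0 := by
    intro β hβ
    rw [hexp]
    by_cases hβT : β ∈ Submodule.span ℝ (T : Set V)
    · rw [horthH β hβT, zero_add]
      exact mul_ne_zero (ne_of_gt hε0) (hvchar β hβ hβT).2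
    · exact (sign_helper (habs β hβ hβT)).2
  have hch : ∀ β ∈ Φ, (0 < ⟪β, lam⟫ ↔ 0 < ⟪β, σ lam⟫) := by
    intro β hβ
    have hβσ : ⟪β, σ lam⟫ = ⟪σ⁻¹ β, lam⟫ := by
      calc ⟪β, σ lam⟫ = ⟪σ (σ⁻¹ β), σ lam⟫ := by rw [hσapp β]
        _ = ⟪σ⁻¹ β, lam⟫ := σ.inner_map_map _ _
    have hδΦ : σ⁻¹ β ∈ Φ := hσinvmaps β hβ
    rw [hβσ, hexp, hexp]
    by_cases hβT : β ∈ Submodule.span ℝ (T : Set V)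
    · have hδT : σ⁻¹ β ∈ Submodule.span ℝ (T : Set V) :=
        hzero_mem _ hδΦ (by rw [hinnerHinv β]; exact horthH β hβT)
      rw [horthH β hβT, horthH _ hδT, zero_add, zero_add]
      have h1 := (hvchar β hβ hβT).1
      have h2 := (hvchar _ hδΦ hδT).1
      have h3 := hiffP β hβ hβT
      rw [mul_pos_iff_of_pos_left hε0, mul_pos_iff_of_pos_left hε0]
      rw [← h1, ← h2]
      exact h3
    · have hδH : ⟪σ⁻¹ β, H⟫ = ⟪β, H⟫ := hinnerHinv β
      have hδT : σ⁻¹ β ∉ Submodule.span ℝ (T : Set V) := by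
        intro hc
        exact hreg β hβ hβT (by rw [← hδH]; exact horthH _ hc)
      have hb1 := habs β hβ hβT
      have hb2 := habs _ hδΦ hδT
      rw [hδH] at hb2
      rw [hδH, (sign_helper hb1).1, (sign_helper hb2).1]
  have hσ1 : σ = 1 :=
    fixes_chamber_eq_one hfin h0 hrefl hcrys hbase hli hΔΦ hσW lam hreglam hch
  apply hne
  have h6 : w * w'⁻¹ = 1 := hσ1
  have h7 : w = w' := by
    have := mul_inv_eq_one.1 h6
    exact this
  exact h7.symm
end

section
/- Fix s ∈ ℂ and let 𝔙_s be the set of all functions f : (0,∞) → ℂ such that D_{a₂}^{1−s}(D_{a₁}^{s} f) = 0 for all a₁, a₂ > 0. If s ≠ 1/2, then 𝔙_s = {y ↦ α·y^s + β·y^{1−s} : α, β ∈ ℂ} (with no regularity assumption on f). If s = 1/2, then the set of continuous elements of 𝔙_s equals {y ↦ α·y^{1/2} + β·y^{1/2}·log y : α, β ∈ ℂ}. -/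
/-- The difference operator `(D_a^w f)(y) = f (a y) − a^w f (y)` on functions on `(0,∞)`. -/
noncomputable def Dop (a : ℝ) (w : ℂ) (f : ℝ → ℂ) : ℝ → ℂ :=
  fun y => f (a * y) - (a : ℂ) ^ w * f y

/-- The space of functions annihilated by all `D_{a₂}^{1-s} D_{a₁}^{s}`, `a₁, a₂ > 0`,
on `(0,∞)`. -/
def solSpace (s : ℂ) : Set (ℝ → ℂ) :=
  {f | ∀ a₁ : ℝ, 0 < a₁ → ∀ a₂ : ℝ, 0 < a₂ → ∀ y : ℝ, 0 < y →
    Dop a₂ (1 - s) (Dop a₁ s f) y = 0}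

lemma cpow_exp' (w : ℂ) (t : ℝ) : ((Real.exp t : ℝ) : ℂ) ^ w = Complex.exp (w * t) := by
  rw [Complex.cpow_def_of_ne_zero (by exact_mod_cast (Real.exp_pos t).ne'),
    show ((Real.exp t : ℝ) : ℂ) = Complex.exp t by push_cast [Complex.ofReal_exp]; ring,
    Complex.log_exp (by simpa using Real.pi_pos) (by simpa using Real.pi_pos.le), mul_comm]

lemma cpow_pos_real (w : ℂ) {y : ℝ} (hy : 0 < y) :
    ((y : ℝ) : ℂ) ^ w = Complex.exp (w * Real.log y) := by
  conv_lhs => rw [show y = Real.exp (Real.log y) from (Real.exp_log hy).symm]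
  exact cpow_exp' w _

lemma feq {s : ℂ} {f : ℝ → ℂ} (hf : f ∈ solSpace s) (u t1 t2 : ℝ) :
    f (Real.exp (u + t1 + t2)) - Complex.exp (s * t1) * f (Real.exp (u + t2))
      - Complex.exp ((1 - s) * t2) * f (Real.exp (u + t1))
      + Complex.exp (s * t1 + (1 - s) * t2) * f (Real.exp u) = 0 := by
  have h := hf (Real.exp t1) (Real.exp_pos t1) (Real.exp t2) (Real.exp_pos t2)
    (Real.exp u) (Real.exp_pos u)
  simp only [Dop] at h
  rw [show Real.exp t1 * (Real.exp t2 * Real.exp u) = Real.exp (u + t1 + t2) by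
        rw [← Real.exp_add, ← Real.exp_add]; ring_nf,
      show Real.exp t2 * Real.exp u = Real.exp (u + t2) by rw [← Real.exp_add]; ring_nf,
      show Real.exp t1 * Real.exp u = Real.exp (u + t1) by rw [← Real.exp_add]; ring_nf,
      cpow_exp', cpow_exp'] at h
  rw [Complex.exp_add]
  linear_combination h

lemma exists_t0 {s : ℂ} (hs : s ≠ 1 / 2) :
    ∃ t0 : ℝ, Complex.exp (s * t0) ≠ Complex.exp ((1 - s) * t0) := by
  by_contra h
  push_neg at h
  have key : ∀ t : ℝ, Complex.exp ((2 * s - 1) * t) = 1 := by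
    intro t
    have := (Complex.exp_eq_exp_iff_exp_sub_eq_one.mp (h t))
    rw [show s * t - (1 - s) * t = (2 * s - 1) * t by ring] at this
    exact this
  have hw : (2 : ℂ) * s - 1 ≠ 0 := by
    intro h0; exact hs (by linear_combination h0 / 2)
  obtain ⟨n, hn⟩ := Complex.exp_eq_one_iff.mp (by simpa using key 1)
  obtain ⟨m, hm⟩ := Complex.exp_eq_one_iff.mp (key (Real.sqrt 2))
  have hn0 : n ≠ 0 := by
    rintro rfl; simp at hn; exact hw hn
  have hpi : (2 * (Real.pi : ℂ) * Complex.I) ≠ 0 := by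
    simp [Real.pi_ne_zero, Complex.I_ne_zero]
  have hc : ((Real.sqrt 2 : ℝ) : ℂ) * n = m := by
    rw [hn] at hm
    exact mul_right_cancel₀ hpi (show ((Real.sqrt 2 : ℝ) : ℂ) * n * (2 * (Real.pi : ℂ) * Complex.I)
      = (m : ℂ) * (2 * (Real.pi : ℂ) * Complex.I) by linear_combination hm)
  have hr : Real.sqrt 2 * n = m := by exact_mod_cast hc
  refine irrational_sqrt_two ⟨(m : ℚ) / n, ?_⟩
  push_cast
  field_simp
  linarith [hr]

lemma forward_ne {s : ℂ} {f : ℝ → ℂ} (hs : s ≠ 1 / 2) (hf : f ∈ solSpace s) :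
    ∃ α β : ℂ, ∀ y : ℝ, 0 < y → f y = α * (y : ℂ) ^ s + β * (y : ℂ) ^ (1 - s) := by
  obtain ⟨t0, ht0⟩ := exists_t0 hs
  set l := Complex.exp (s * t0) with hl
  set m := Complex.exp ((1 - s) * t0) with hm
  have hlm : l - m ≠ 0 := sub_ne_zero.mpr ht0
  refine ⟨(f (Real.exp t0) - m * f 1) / (l - m), (l * f 1 - f (Real.exp t0)) / (l - m), ?_⟩
  intro y hy
  set t := Real.log y with htdef
  have E1 := feq hf 0 t t0
  have E2 := feq hf 0 t0 t
  rw [show (0 : ℝ) + t0 + t = 0 + t + t0 by ring] at E2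
  simp only [zero_add] at E1 E2
  rw [Complex.exp_add] at E1 E2
  have hfy : f (Real.exp t) = f y := by rw [htdef, Real.exp_log hy]
  have hexp0 : f (Real.exp (0:ℝ)) = f 1 := by norm_num
  rw [cpow_pos_real s hy, cpow_pos_real (1 - s) hy, ← htdef]
  have key : (l - m) * f y =
      Complex.exp (s * t) * (f (Real.exp t0) - m * f 1)
        + Complex.exp ((1 - s) * t) * (l * f 1 - f (Real.exp t0)) := by
    rw [← hfy]
    simp only [Real.exp_zero] at E1 E2
    linear_combination E1 - E2
  field_simp
  rw [mul_comm (t : ℂ) (1 - s)]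
  linear_combination key

lemma cpow_mul_pos {x y : ℝ} (hx : 0 < x) (hy : 0 < y) (r : ℂ) :
    ((x * y : ℝ) : ℂ) ^ r = (x : ℂ) ^ r * (y : ℂ) ^ r := by
  push_cast
  exact Complex.mul_cpow_ofReal_nonneg hx.le hy.le r

lemma mem_sol {s α β : ℂ} {f : ℝ → ℂ}
    (h : ∀ y : ℝ, 0 < y → f y = α * (y : ℂ) ^ s + β * (y : ℂ) ^ (1 - s)) :
    f ∈ solSpace s := by
  intro a1 ha1 a2 ha2 y hy
  simp only [Dop]
  rw [h _ (by positivity : (0:ℝ) < a1 * (a2 * y)), h _ (mul_pos ha2 hy),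
      h _ (mul_pos ha1 hy), h _ hy,
      cpow_mul_pos ha1 (mul_pos ha2 hy), cpow_mul_pos ha1 (mul_pos ha2 hy),
      cpow_mul_pos ha2 hy, cpow_mul_pos ha2 hy,
      cpow_mul_pos ha1 hy, cpow_mul_pos ha1 hy]
  ring

lemma mem_sol_half {α β : ℂ} {f : ℝ → ℂ}
    (h : ∀ y : ℝ, 0 < y →
      f y = α * (y : ℂ) ^ ((1 : ℂ) / 2) + β * (y : ℂ) ^ ((1 : ℂ) / 2) * Real.log y) :
    f ∈ solSpace (1 / 2) := by
  intro a1 ha1 a2 ha2 y hy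
  simp only [Dop]
  rw [show (1 : ℂ) - 1 / 2 = 1 / 2 by norm_num]
  rw [h _ (by positivity : (0:ℝ) < a1 * (a2 * y)), h _ (mul_pos ha2 hy),
      h _ (mul_pos ha1 hy), h _ hy,
      cpow_mul_pos ha1 (mul_pos ha2 hy), cpow_mul_pos ha2 hy, cpow_mul_pos ha1 hy,
      Real.log_mul ha1.ne' (mul_pos ha2 hy).ne', Real.log_mul ha2.ne' hy.ne',
      Real.log_mul ha1.ne' hy.ne']
  push_cast
  ring

lemma contOn_model (α β : ℂ) :
    ContinuousOn (fun y : ℝ =>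
      α * (y : ℂ) ^ ((1 : ℂ) / 2) + β * (y : ℂ) ^ ((1 : ℂ) / 2) * Real.log y)
      (Set.Ioi 0) := by
  have hL : ContinuousOn (fun y : ℝ => ((Real.log y : ℝ) : ℂ)) (Set.Ioi 0) :=
    Complex.continuous_ofReal.comp_continuousOn
      (Real.continuousOn_log.mono (fun x hx => ne_of_gt hx))
  have hE : ContinuousOn (fun y : ℝ => Complex.exp ((1 / 2 : ℂ) * Real.log y)) (Set.Ioi 0) :=
    Complex.continuous_exp.comp_continuousOn (continuousOn_const.mul hL)
  have : ContinuousOn (fun y : ℝ =>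
      α * Complex.exp ((1 / 2 : ℂ) * Real.log y)
        + β * Complex.exp ((1 / 2 : ℂ) * Real.log y) * Real.log y) (Set.Ioi 0) :=
    ((continuousOn_const.mul hE).add ((continuousOn_const.mul hE).mul hL))
  refine this.congr fun y hy => ?_
  rw [cpow_pos_real _ hy]

lemma forward_half {f : ℝ → ℂ} (hf : f ∈ solSpace (1 / 2))
    (hc : ContinuousOn f (Set.Ioi 0)) :
    ∃ α β : ℂ, ∀ y : ℝ, 0 < y →
      f y = α * (y : ℂ) ^ ((1 : ℂ) / 2) + β * (y : ℂ) ^ ((1 : ℂ) / 2) * Real.log y := by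
  set φ : ℝ → ℂ := fun t => f (Real.exp t) / Complex.exp ((t : ℂ) / 2) - f 1 with hφ
  have hadd : ∀ a b : ℝ, φ (a + b) = φ a + φ b := by
    intro a b
    have E := feq hf 0 a b
    rw [show (1 : ℂ) - 1 / 2 = 1 / 2 by norm_num] at E
    simp only [zero_add, Real.exp_zero, Complex.exp_add,
      show ∀ x : ℝ, (1 / 2 : ℂ) * (x : ℂ) = (x : ℂ) / 2 from fun x => by ring] at E
    simp only [hφ]
    rw [show ((a + b : ℝ) : ℂ) = (a : ℂ) + b by push_cast; ring, add_div, Complex.exp_add]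
    field_simp
    linear_combination E
  have hcont : Continuous φ := by
    have h1 : Continuous (fun t : ℝ => f (Real.exp t)) :=
      hc.comp_continuous Real.continuous_exp fun t => Real.exp_pos t
    have h2 : Continuous (fun t : ℝ => Complex.exp ((t : ℂ) / 2)) :=
      Complex.continuous_exp.comp (Complex.continuous_ofReal.div_const 2)
    exact (h1.div h2 fun t => Complex.exp_ne_zero _).sub continuous_const
  set Φ : ℝ →+ ℂ := AddMonoidHom.mk' φ fun a b => hadd a b with hΦ
  have hq : ∀ q : ℚ, φ (q : ℝ) = (q : ℂ) * φ 1 := by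
    intro q
    have h1 : ((q : ℝ)) = q • (1 : ℝ) := by simp
    have h2 : Φ (q • (1 : ℝ)) = q • Φ (1 : ℝ) := map_rat_smul Φ q 1
    have h3 : (q : ℂ) * φ 1 = q • (φ 1) := by rw [Rat.smul_def]
    rw [h1, h3]
    exact h2
  have hlin : φ = fun t : ℝ => (t : ℂ) * φ 1 := by
    refine Continuous.ext_on (Rat.denseRange_cast (𝕜 := ℝ)) hcont
      (Complex.continuous_ofReal.mul continuous_const) ?_
    rintro x ⟨q, rfl⟩
    exact hq q
  refine ⟨f 1, φ 1, ?_⟩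
  intro y hy
  have ht := congrFun hlin (Real.log y)
  have ht2 : f y / Complex.exp (((Real.log y : ℝ) : ℂ) / 2) - f 1
      = ((Real.log y : ℝ) : ℂ) * φ 1 := by
    rw [← ht]
    simp only [hφ]
    rw [Real.exp_log hy]
  have hne := Complex.exp_ne_zero (((Real.log y : ℝ) : ℂ) / 2)
  have h3 : f y = (((Real.log y : ℝ) : ℂ) * φ 1 + f 1)
      * Complex.exp (((Real.log y : ℝ) : ℂ) / 2) := by
    field_simp at ht2
    linear_combination ht2
  rw [cpow_pos_real _ hy,
    show (1 / 2 : ℂ) * ((Real.log y : ℝ) : ℂ) = ((Real.log y : ℝ) : ℂ) / 2 by ring]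
  linear_combination h3

theorem stmt_19 (s : ℂ) :
    (s ≠ 1 / 2 →
      solSpace s = {f : ℝ → ℂ | ∃ α β : ℂ, ∀ y : ℝ, 0 < y →
        f y = α * (y : ℂ) ^ s + β * (y : ℂ) ^ (1 - s)}) ∧
    (s = 1 / 2 →
      {f ∈ solSpace s | ContinuousOn f (Set.Ioi 0)} =
        {f : ℝ → ℂ | ∃ α β : ℂ, ∀ y : ℝ, 0 < y →
          f y = α * (y : ℂ) ^ ((1 : ℂ) / 2) + β * (y : ℂ) ^ ((1 : ℂ) / 2) * Real.log y}) := by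
  constructor
  · intro hs
    ext f
    constructor
    · intro hf
      exact forward_ne hs hf
    · rintro ⟨α, β, h⟩
      exact mem_sol h
  · rintro rfl
    ext f
    constructor
    · rintro ⟨hf, hc⟩
      exact forward_half hf hc
    · rintro ⟨α, β, h⟩
      refine ⟨mem_sol_half h, ?_⟩
      exact (contOn_model α β).congr fun y hy => h y hy
end
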